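/- Let α, V, μ, γ, β > 0. Then there exists a unique pair (M*, C*) with M* > 0 and C* > 0 such that α·V·C*² − μ·M* = 0 and γ − β·C* − V·C*·M* = 0. -/

import Mathlib

/-- Existence and uniqueness of the positive stationary state of the planar system
`M' = α V C² − μ M`, `C' = γ − β C − V C M`. -/
theorem stmt8 (α V μ γ β : ℝ) (hα : 0 < α) (hV : 0 < V) (hμ : 0 < μ) (hγ : 0 < γ) (hβ : 0 < β) :
    ∃! p : ℝ × ℝ, 0 < p.1 ∧ 0 < p.2 ∧
      α * V * p.2 ^ 2 - μ * p.1 = 0 ∧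
      γ - β * p.2 - V * p.2 * p.1 = 0 := by
  set k := α * V ^ 2 / μ with hk
  have hk0 : 0 < k := by positivity
  set f : ℝ → ℝ := fun c => β * c + k * c ^ 3 with hf
  have hmono : StrictMono f := by
    intro a b hab
    simp only [hf]
    nlinarith [sq_nonneg (a + b), sq_nonneg a, sq_nonneg b,
      mul_pos hk0 (sub_pos.mpr hab), mul_pos hβ (sub_pos.mpr hab)]
  have hcont : Continuous f := by
    simp only [hf]; continuity
  have hle : (0:ℝ) ≤ γ / β := le_of_lt (by positivity)
  have hmem : γ ∈ Set.Icc (f 0) (f (γ / β)) := by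
    constructor
    · simp [hf]; positivity
    · simp only [hf]
      have : β * (γ / β) = γ := by field_simp
      nlinarith [pow_pos (div_pos hγ hβ) 3, mul_pos hk0 (pow_pos (div_pos hγ hβ) 3)]
  obtain ⟨c, hcI, hfc⟩ := intermediate_value_Icc hle hcont.continuousOn hmem
  have hc0 : 0 < c := by
    rcases lt_or_eq_of_le hcI.1 with h | h
    · exact h
    · exfalso; rw [← h] at hfc; simp [hf] at hfc; linarith
  refine ⟨(α * V * c ^ 2 / μ, c), ⟨by positivity, hc0, by field_simp; ring, ?_⟩, ?_⟩
  · have : V * c * (α * V * c ^ 2 / μ) = k * c ^ 3 := by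
      rw [hk]; field_simp
    rw [this]
    have : β * c + k * c ^ 3 = γ := hfc
    linarith
  · rintro ⟨M, C⟩ ⟨hM, hC, h1, h2⟩
    have hMeq : M = α * V * C ^ 2 / μ := by
      field_simp; linarith
    have hfC : f C = γ := by
      simp only [hf, hk]
      have : V * C * M = α * V ^ 2 / μ * C ^ 3 := by
        rw [hMeq]; field_simp
      nlinarith [h2]
    have : C = c := hmono.injective (hfC.trans hfc.symm)
    subst this
    simp [hMeq]
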